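/- arXiv:1406.7760 — 3 statements merged into one kernel-verified Lean document; each statement's English description precedes it below -/
import Mathlib

section
/- Let $n \ge 2$, $n' = n/(n-1)$, and $1 < p < n$. For every nonincreasing nonnegative function $g$ on $(0,1)$, the quantity $\| g^{**}(t^{1/n'}) \|_{L^{p'}(0,1)}$, where $g^{**}(u) = u^{-1} \int_0^u g(s)\,ds$ and $p' = p/(p-1)$, is equivalent (with constants depending only on $n$ and $p$) to the Lorentz norm $\|g\|_{L^{p'(n-1)/n, p'}(0,1)} = \big( \int_0^1 \big( t^{n/(p'(n-1)) - 1/p'} g(t) \big)^{p'} dt \big)^{1/p'}$. -/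
open MeasureTheory Set ENNReal

/-- 1-d change of variables for lintegral. -/
theorem lintegral_subst_rpow (r : ℝ) (hr : 1 < r) (H : ℝ → ℝ≥0∞) :
    ∫⁻ t in Set.Ioo (0:ℝ) 1, H t
      = ∫⁻ u in Set.Ioo (0:ℝ) 1, ENNReal.ofReal (r * u ^ (r - 1)) * H (u ^ r) := by
  have hr0 : 0 < r := by linarith
  have himg : (fun u : ℝ => u ^ r) '' Set.Ioo 0 1 = Set.Ioo (0:ℝ) 1 := by
    apply Set.Subset.antisymm
    · rintro t ⟨u, hu, rfl⟩
      exact ⟨Real.rpow_pos_of_pos hu.1 r, Real.rpow_lt_one hu.1.le hu.2 hr0⟩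
    · rintro t ht
      refine ⟨t ^ r⁻¹, ⟨Real.rpow_pos_of_pos ht.1 _, Real.rpow_lt_one ht.1.le ht.2 (by positivity)⟩, ?_⟩
      show (t ^ r⁻¹) ^ r = t
      rw [← Real.rpow_mul ht.1.le, inv_mul_cancel₀ (ne_of_gt hr0), Real.rpow_one]
  have hderiv : ∀ u ∈ Set.Ioo (0:ℝ) 1,
      HasDerivWithinAt (fun x : ℝ => x ^ r) (r * u ^ (r - 1)) (Set.Ioo 0 1) u := fun u hu =>
    (Real.hasDerivAt_rpow_const (Or.inl (ne_of_gt hu.1))).hasDerivWithinAt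
  have hinj : Set.InjOn (fun u : ℝ => u ^ r) (Set.Ioo 0 1) := by
    intro x hx y hy hxy
    have : Set.InjOn (fun u : ℝ => u ^ r) (Set.Ioi 0) :=
      fun a ha b hb hab => by
        rcases lt_trichotomy a b with h | h | h
        · exact absurd hab (ne_of_lt (Real.rpow_lt_rpow (le_of_lt ha) h hr0))
        · exact h
        · exact absurd hab.symm (ne_of_lt (Real.rpow_lt_rpow (le_of_lt hb) h hr0))
    exact this hx.1 hy.1 hxy
  calc ∫⁻ t in Set.Ioo (0:ℝ) 1, H t
      = ∫⁻ t in (fun u : ℝ => u ^ r) '' Set.Ioo 0 1, H t := by rw [himg]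
    _ = ∫⁻ u in Set.Ioo (0:ℝ) 1,
          ENNReal.ofReal |((1 : ℝ →L[ℝ] ℝ).smulRight (r * u ^ (r - 1))).det| * H (u ^ r) := by
        exact MeasureTheory.lintegral_image_eq_lintegral_abs_det_fderiv_mul volume
          measurableSet_Ioo
          (fun u hu => (hderiv u hu).hasFDerivWithinAt) hinj H
    _ = ∫⁻ u in Set.Ioo (0:ℝ) 1, ENNReal.ofReal (r * u ^ (r - 1)) * H (u ^ r) := by
        refine setLIntegral_congr_fun measurableSet_Ioo (
          fun u hu => ?_)
        rw [ContinuousLinearMap.det_smulRight, ContinuousLinearMap.one_apply, one_mul, abs_of_nonneg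
          (mul_nonneg hr0.le (Real.rpow_nonneg hu.1.le _))]

theorem tonelli_triangle (k : ℝ → ℝ≥0∞) (hk : Measurable k) (e : ℝ) :
    ∫⁻ u in Set.Ioo (0:ℝ) 1, (ENNReal.ofReal u) ^ e * ∫⁻ s in Set.Ioo 0 u, k s
      = ∫⁻ s in Set.Ioo (0:ℝ) 1, k s * ∫⁻ u in Set.Ioo s 1, (ENNReal.ofReal u) ^ e := by
  have hS : MeasurableSet {y : ℝ × ℝ | 0 < y.2 ∧ y.2 < y.1} :=
    (measurableSet_lt measurable_const measurable_snd).inter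
      (measurableSet_lt measurable_snd measurable_fst)
  have hmeas : Measurable (Function.uncurry fun u s =>
      (ENNReal.ofReal u) ^ e * (Set.Ioo (0:ℝ) u).indicator k s) := by
    have : (Function.uncurry fun u s => (ENNReal.ofReal u) ^ e
        * (Set.Ioo (0:ℝ) u).indicator k s)
        = fun y : ℝ × ℝ => (ENNReal.ofReal y.1) ^ e *
            ({y : ℝ × ℝ | 0 < y.2 ∧ y.2 < y.1}.indicator (fun z => k z.2) y) := by
      ext y
      simp only [Function.uncurry, Set.indicator, Set.mem_Ioo, Set.mem_setOf_eq]
    rw [this]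
    exact ((ENNReal.measurable_ofReal.comp measurable_fst).pow measurable_const).mul
      ((hk.comp measurable_snd).indicator hS)
  calc ∫⁻ u in Set.Ioo (0:ℝ) 1, (ENNReal.ofReal u) ^ e * ∫⁻ s in Set.Ioo 0 u, k s
      = ∫⁻ u in Set.Ioo (0:ℝ) 1, ∫⁻ s in Set.Ioo (0:ℝ) 1,
          (ENNReal.ofReal u) ^ e * (Set.Ioo (0:ℝ) u).indicator k s := by
        refine setLIntegral_congr_fun measurableSet_Ioo
          (fun u hu => ?_)
        rw [lintegral_const_mul _ (hk.indicator measurableSet_Ioo),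
          setLIntegral_indicator measurableSet_Ioo,
          Set.inter_eq_left.mpr (Set.Ioo_subset_Ioo le_rfl hu.2.le)]
    _ = ∫⁻ s in Set.Ioo (0:ℝ) 1, ∫⁻ u in Set.Ioo (0:ℝ) 1,
          (ENNReal.ofReal u) ^ e * (Set.Ioo (0:ℝ) u).indicator k s := by
        exact lintegral_lintegral_swap hmeas.aemeasurable
    _ = ∫⁻ s in Set.Ioo (0:ℝ) 1, k s * ∫⁻ u in Set.Ioo s 1, (ENNReal.ofReal u) ^ e := by
        refine setLIntegral_congr_fun measurableSet_Ioo
          (fun s hs => ?_)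
        have heq : (fun u => (ENNReal.ofReal u) ^ e * (Set.Ioo (0:ℝ) u).indicator k s)
            = fun u => (Set.Ioi s).indicator (fun u => (ENNReal.ofReal u) ^ e * k s) u := by
          ext u
          by_cases h : s < u
          · simp [Set.indicator, Set.mem_Ioo, Set.mem_Ioi, h, hs.1]
          · simp [Set.indicator, Set.mem_Ioo, Set.mem_Ioi, h, hs.1]
        rw [heq, setLIntegral_indicator measurableSet_Ioi]
        have : Set.Ioi s ∩ Set.Ioo (0:ℝ) 1 = Set.Ioo s 1 := by
          ext u
          simp only [Set.mem_inter_iff, Set.mem_Ioi, Set.mem_Ioo]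
          constructor
          · rintro ⟨h1, _, h3⟩; exact ⟨h1, h3⟩
          · rintro ⟨h1, h2⟩; exact ⟨h1, lt_trans hs.1 h1, h2⟩
        rw [this, lintegral_mul_const _ ((ENNReal.measurable_ofReal).pow measurable_const),
          mul_comm]

theorem lintegral_rpow_Ioo_zero (c : ℝ) (hc : c < 1) (u : ℝ) (hu : 0 < u) :
    ∫⁻ s in Set.Ioo (0:ℝ) u, ENNReal.ofReal (s ^ (-c))
      = ENNReal.ofReal (u ^ (1 - c) / (1 - c)) := by
  have h1 : -1 < -c := by linarith
  have hint : IntegrableOn (fun s : ℝ => s ^ (-c)) (Set.Ioo 0 u) := by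
    have := (intervalIntegral.intervalIntegrable_rpow' (a := 0) (b := u) h1)
    rw [intervalIntegrable_iff_integrableOn_Ioc_of_le hu.le] at this
    exact this.mono_set Set.Ioo_subset_Ioc_self
  rw [← ofReal_integral_eq_lintegral_ofReal hint]
  · congr 1
    rw [← MeasureTheory.integral_Ioc_eq_integral_Ioo,
      ← intervalIntegral.integral_of_le hu.le,
      integral_rpow (Or.inl h1)]
    rw [Real.zero_rpow (by linarith : -c + 1 ≠ 0)]
    ring_nf
  · filter_upwards [ae_restrict_mem measurableSet_Ioo] with s hs
    exact Real.rpow_nonneg hs.1.le _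

theorem lintegral_rpow_Ioo_one (e : ℝ) (he : e < -1) (s : ℝ) (hs : 0 < s) (hs1 : s < 1) :
    ∫⁻ u in Set.Ioo s 1, ENNReal.ofReal (u ^ e)
      ≤ ENNReal.ofReal (s ^ (e + 1) / (-(e + 1))) := by
  have h0 : (0:ℝ) ∉ Set.uIcc s 1 := by
    rw [Set.uIcc_of_le hs1.le]
    intro h; exact absurd (h : (0:ℝ) ∈ Set.Icc s 1).1 (by linarith)
  have hint : IntegrableOn (fun u : ℝ => u ^ e) (Set.Ioo s 1) := by
    have := intervalIntegral.intervalIntegrable_rpow (μ := volume) (r := e) (a := s) (b := 1) (Or.inr h0)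
    rw [intervalIntegrable_iff_integrableOn_Ioc_of_le hs1.le] at this
    exact this.mono_set Set.Ioo_subset_Ioc_self
  rw [← ofReal_integral_eq_lintegral_ofReal hint]
  · apply ENNReal.ofReal_le_ofReal
    rw [← MeasureTheory.integral_Ioc_eq_integral_Ioo,
      ← intervalIntegral.integral_of_le hs1.le,
      integral_rpow (Or.inr ⟨by linarith, h0⟩), Real.one_rpow]
    have hx : (0:ℝ) < s ^ (e + 1) := Real.rpow_pos_of_pos hs _
    have hd : (0:ℝ) < -(e + 1) := by linarith
    have heq : (1 - s ^ (e + 1)) / (e + 1) = (s ^ (e + 1) - 1) / (-(e + 1)) := by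
      rw [div_neg_eq_neg_div]
      ring_nf
    rw [heq]
    gcongr
    linarith
  · filter_upwards [ae_restrict_mem measurableSet_Ioo] with u huu
    exact Real.rpow_nonneg (by linarith [huu.1] : (0:ℝ) ≤ u) _

theorem holder_step (q a b : ℝ) (hq : 1 < q) (hb : 0 < b) (hbq : b < q - 1)
    (G : ℝ → ℝ≥0∞) (hG : Measurable G) (u : ℝ) (hu : 0 < u) :
    (∫⁻ s in Set.Ioo (0:ℝ) u, G s) ^ q
      ≤ (∫⁻ s in Set.Ioo (0:ℝ) u, (ENNReal.ofReal s) ^ b * G s ^ q)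
          * ENNReal.ofReal (u ^ (1 - b / (q - 1)) / (1 - b / (q - 1))) ^ (q - 1) := by
  have hq0 : (0:ℝ) < q := by linarith
  have hq1 : (0:ℝ) < q - 1 := by linarith
  set c : ℝ := b / (q - 1) with hc_def
  have hc0 : 0 < c := div_pos hb hq1
  have hc1 : c < 1 := (div_lt_one hq1).mpr hbq
  set q' : ℝ := q / (q - 1) with hq'_def
  have hconj : q.HolderConjugate q' := Real.HolderConjugate.conjExponent hq
  have hq'0 : (0:ℝ) < q' := hconj.symm.pos
  -- Hölder
  have hf : Measurable fun s : ℝ => (ENNReal.ofReal s) ^ (b / q) * G s :=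
    ((ENNReal.measurable_ofReal).pow measurable_const).mul hG
  have hgm : Measurable fun s : ℝ => (ENNReal.ofReal s) ^ (-(b / q)) :=
    (ENNReal.measurable_ofReal).pow measurable_const
  have key : ∫⁻ s in Set.Ioo (0:ℝ) u, G s
      ≤ (∫⁻ s in Set.Ioo (0:ℝ) u, ((ENNReal.ofReal s) ^ (b / q) * G s) ^ q) ^ (1 / q)
        * (∫⁻ s in Set.Ioo (0:ℝ) u, ((ENNReal.ofReal s) ^ (-(b / q))) ^ q') ^ (1 / q') := by
    have := ENNReal.lintegral_mul_le_Lp_mul_Lq (volume.restrict (Set.Ioo (0:ℝ) u)) hconj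
      hf.aemeasurable hgm.aemeasurable
    refine le_trans (le_of_eq ?_) this
    refine setLIntegral_congr_fun measurableSet_Ioo
      (fun s hs => ?_)
    have hs0 : ENNReal.ofReal s ≠ 0 := by
      simp [ENNReal.ofReal_eq_zero]; linarith [hs.1]
    have hstop : ENNReal.ofReal s ≠ ⊤ := ENNReal.ofReal_ne_top
    show G s = (ENNReal.ofReal s) ^ (b / q) * G s * (ENNReal.ofReal s) ^ (-(b / q))
    rw [mul_comm ((ENNReal.ofReal s) ^ (b / q)) (G s), mul_assoc,
      ← ENNReal.rpow_add _ _ hs0 hstop]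
    simp
  -- compute the second factor
  have hsecond : ∫⁻ s in Set.Ioo (0:ℝ) u, ((ENNReal.ofReal s) ^ (-(b / q))) ^ q'
      = ENNReal.ofReal (u ^ (1 - c) / (1 - c)) := by
    rw [← lintegral_rpow_Ioo_zero c hc1 u hu]
    refine setLIntegral_congr_fun measurableSet_Ioo
      (fun s hs => ?_)
    rw [← ENNReal.rpow_mul]
    have : -(b / q) * q' = -c := by
      rw [hq'_def, hc_def]; field_simp
    rw [this, ENNReal.ofReal_rpow_of_pos hs.1]
  -- compute the first factor integrand
  have hfirst : ∫⁻ s in Set.Ioo (0:ℝ) u, ((ENNReal.ofReal s) ^ (b / q) * G s) ^ q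
      = ∫⁻ s in Set.Ioo (0:ℝ) u, (ENNReal.ofReal s) ^ b * G s ^ q := by
    refine setLIntegral_congr_fun measurableSet_Ioo
      (fun s hs => ?_)
    rw [ENNReal.mul_rpow_of_nonneg _ _ hq0.le, ← ENNReal.rpow_mul,
      div_mul_cancel₀ _ (ne_of_gt hq0)]
  rw [hsecond, hfirst] at key
  calc (∫⁻ s in Set.Ioo (0:ℝ) u, G s) ^ q
      ≤ ((∫⁻ s in Set.Ioo (0:ℝ) u, (ENNReal.ofReal s) ^ b * G s ^ q) ^ (1 / q)
        * ENNReal.ofReal (u ^ (1 - c) / (1 - c)) ^ (1 / q')) ^ q :=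
        ENNReal.rpow_le_rpow key hq0.le
    _ = (∫⁻ s in Set.Ioo (0:ℝ) u, (ENNReal.ofReal s) ^ b * G s ^ q)
          * ENNReal.ofReal (u ^ (1 - c) / (1 - c)) ^ (q - 1) := by
        rw [ENNReal.mul_rpow_of_nonneg _ _ hq0.le, ← ENNReal.rpow_mul, ← ENNReal.rpow_mul,
          one_div_mul_cancel (ne_of_gt hq0), ENNReal.rpow_one]
        congr 2
        rw [hq'_def]
        field_simp
theorem hardy_core (q a : ℝ) (hq : 1 < q) (ha : 0 < a) (haq : a < q - 1)
    (G : ℝ → ℝ≥0∞) (hG : Measurable G) :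
    ∫⁻ u in Set.Ioo (0:ℝ) 1, (ENNReal.ofReal u) ^ (a - q) * (∫⁻ s in Set.Ioo 0 u, G s) ^ q
      ≤ ENNReal.ofReal ((1 - (a + q - 1) / 2 / (q - 1))⁻¹ ^ (q - 1))
          * ENNReal.ofReal (((a + q - 1) / 2 - a)⁻¹)
          * ∫⁻ s in Set.Ioo (0:ℝ) 1, (ENNReal.ofReal s) ^ a * G s ^ q := by
  have hq1 : (0:ℝ) < q - 1 := by linarith
  set b : ℝ := (a + q - 1) / 2 with hb_def
  have hab : a < b := by rw [hb_def]; linarith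
  have hb0 : 0 < b := by linarith
  have hbq : b < q - 1 := by rw [hb_def]; linarith
  set c : ℝ := b / (q - 1) with hc_def
  have hc1 : c < 1 := (div_lt_one hq1).mpr hbq
  have hc1' : (0:ℝ) < 1 - c := by linarith
  set e : ℝ := a - 1 - b with he_def
  have he : e < -1 := by rw [he_def]; linarith
  have he1 : e + 1 = a - b := by rw [he_def]; ring
  set D : ℝ≥0∞ := ENNReal.ofReal ((1 - c)⁻¹ ^ (q - 1)) with hD_def
  set k : ℝ → ℝ≥0∞ := fun s => (ENNReal.ofReal s) ^ b * G s ^ q with hk_def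
  have hk : Measurable k := ((ENNReal.measurable_ofReal).pow measurable_const).mul
    (hG.pow measurable_const)
  -- pointwise bound from holder_step
  have step1 : ∀ u ∈ Set.Ioo (0:ℝ) 1,
      (ENNReal.ofReal u) ^ (a - q) * (∫⁻ s in Set.Ioo 0 u, G s) ^ q
        ≤ D * ((ENNReal.ofReal u) ^ e * ∫⁻ s in Set.Ioo 0 u, k s) := by
    intro u hu
    have hU0 : ENNReal.ofReal u ≠ 0 := by simp [ENNReal.ofReal_eq_zero]; linarith [hu.1]
    have hUtop : ENNReal.ofReal u ≠ ⊤ := ENNReal.ofReal_ne_top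
    have h1 := holder_step q a b hq hb0 hbq G hG u hu.1
    have h2 : ENNReal.ofReal (u ^ (1 - c) / (1 - c)) ^ (q - 1)
        = D * (ENNReal.ofReal u) ^ ((1 - c) * (q - 1)) := by
      rw [div_eq_mul_inv, ENNReal.ofReal_mul (Real.rpow_nonneg hu.1.le _),
        ENNReal.mul_rpow_of_nonneg _ _ hq1.le,
        ← ENNReal.ofReal_rpow_of_pos hu.1, ← ENNReal.rpow_mul,
        ENNReal.ofReal_rpow_of_nonneg (by positivity) hq1.le, mul_comm]
    calc (ENNReal.ofReal u) ^ (a - q) * (∫⁻ s in Set.Ioo 0 u, G s) ^ q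
        ≤ (ENNReal.ofReal u) ^ (a - q) *
            ((∫⁻ s in Set.Ioo 0 u, k s) * (D * (ENNReal.ofReal u) ^ ((1 - c) * (q - 1)))) := by
          rw [← h2]
          exact mul_le_mul_right h1 _
      _ = D * ((ENNReal.ofReal u) ^ e * ∫⁻ s in Set.Ioo 0 u, k s) := by
          rw [show e = (a - q) + (1 - c) * (q - 1) by
            rw [he_def, hc_def, hb_def]; field_simp; ring,
            ENNReal.rpow_add _ _ hU0 hUtop]
          ring
  -- integrate the pointwise bound
  calc ∫⁻ u in Set.Ioo (0:ℝ) 1, (ENNReal.ofReal u) ^ (a - q) * (∫⁻ s in Set.Ioo 0 u, G s) ^ q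
      ≤ ∫⁻ u in Set.Ioo (0:ℝ) 1, D * ((ENNReal.ofReal u) ^ e * ∫⁻ s in Set.Ioo 0 u, k s) := by
        refine setLIntegral_mono' measurableSet_Ioo step1
    _ = D * ∫⁻ u in Set.Ioo (0:ℝ) 1, (ENNReal.ofReal u) ^ e * ∫⁻ s in Set.Ioo 0 u, k s := by
        rw [lintegral_const_mul']
        exact ENNReal.ofReal_ne_top
    _ = D * ∫⁻ s in Set.Ioo (0:ℝ) 1, k s * ∫⁻ u in Set.Ioo s 1, (ENNReal.ofReal u) ^ e := by
        rw [tonelli_triangle k hk e]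
    _ ≤ D * ∫⁻ s in Set.Ioo (0:ℝ) 1,
          ENNReal.ofReal (((a + q - 1) / 2 - a)⁻¹) * ((ENNReal.ofReal s) ^ a * G s ^ q) := by
        refine mul_le_mul_right (setLIntegral_mono' measurableSet_Ioo fun s hs => ?_) _
        have hS0 : ENNReal.ofReal s ≠ 0 := by simp [ENNReal.ofReal_eq_zero]; linarith [hs.1]
        have hStop : ENNReal.ofReal s ≠ ⊤ := ENNReal.ofReal_ne_top
        have hinner : ∫⁻ u in Set.Ioo s 1, (ENNReal.ofReal u) ^ e
            ≤ ENNReal.ofReal (s ^ (e + 1) / (-(e + 1))) := by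
          rw [setLIntegral_congr_fun measurableSet_Ioo (
            fun u hu => (ENNReal.ofReal_rpow_of_pos (lt_trans hs.1 hu.1) : _))]
          exact lintegral_rpow_Ioo_one e he s hs.1 hs.2
        calc k s * ∫⁻ u in Set.Ioo s 1, (ENNReal.ofReal u) ^ e
            ≤ k s * ENNReal.ofReal (s ^ (e + 1) / (-(e + 1))) := mul_le_mul_right hinner _
          _ = ENNReal.ofReal (((a + q - 1) / 2 - a)⁻¹) * ((ENNReal.ofReal s) ^ a * G s ^ q) := by
              rw [hk_def]
              have hba : (0:ℝ) < b - a := by linarith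
              have h1 : -(e + 1) = b - a := by rw [he1]; ring
              rw [h1, he1, div_eq_mul_inv,
                ENNReal.ofReal_mul (Real.rpow_nonneg hs.1.le _),
                ← ENNReal.ofReal_rpow_of_pos hs.1]
              have h2 : ENNReal.ofReal s ^ b * G s ^ q * (ENNReal.ofReal s ^ (a - b)
                  * ENNReal.ofReal ((b - a)⁻¹))
                  = ENNReal.ofReal ((b - a)⁻¹) * (ENNReal.ofReal s ^ b
                      * ENNReal.ofReal s ^ (a - b) * G s ^ q) := by ring
              rw [h2, ← ENNReal.rpow_add _ _ hS0 hStop, show b + (a - b) = a by ring]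
    _ = ENNReal.ofReal ((1 - (a + q - 1) / 2 / (q - 1))⁻¹ ^ (q - 1))
          * ENNReal.ofReal (((a + q - 1) / 2 - a)⁻¹)
          * ∫⁻ s in Set.Ioo (0:ℝ) 1, (ENNReal.ofReal s) ^ a * G s ^ q := by
        rw [lintegral_const_mul' _ _ ENNReal.ofReal_ne_top, hD_def, hc_def, hb_def, mul_assoc]
/-- For `1 < p < n`, the quantity `‖g^{**}(t^{1/n'})‖_{L^{p'}(0,1)}` is equivalent to the
Lorentz norm `‖g‖_{L^{p'(n-1)/n, p'}(0,1)}`, for nonincreasing nonnegative `g` on `(0,1)`;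
here `g^{**}(u) = u⁻¹ ∫_0^u g` and `p' = p/(p-1)`, `n' = n/(n-1)`. -/
theorem optimal_range_norm_identification (n : ℕ) (hn : 2 ≤ n) (p : ℝ) (hp : 1 < p)
    (hpn : p < n) :
    ∃ c C : ℝ, 0 < c ∧ 0 < C ∧ ∀ g : ℝ → ℝ, Measurable g →
      AntitoneOn g (Set.Ioo (0:ℝ) 1) → (∀ t ∈ Set.Ioo (0:ℝ) 1, 0 ≤ g t) →
      c * (∫ t in Set.Ioo (0:ℝ) 1,
              (t ^ ((n:ℝ) / ((p / (p - 1)) * (n - 1)) - 1 / (p / (p - 1))) * g t)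
                ^ (p / (p - 1))) ^ (1 / (p / (p - 1))) ≤
        (∫ t in Set.Ioo (0:ℝ) 1,
            ((t ^ (((n:ℝ) - 1) / n))⁻¹ *
              ∫ s in Set.Ioo (0:ℝ) (t ^ (((n:ℝ) - 1) / n)), g s) ^ (p / (p - 1)))
          ^ (1 / (p / (p - 1)))
      ∧ (∫ t in Set.Ioo (0:ℝ) 1,
            ((t ^ (((n:ℝ) - 1) / n))⁻¹ *
              ∫ s in Set.Ioo (0:ℝ) (t ^ (((n:ℝ) - 1) / n)), g s) ^ (p / (p - 1)))
          ^ (1 / (p / (p - 1)))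
        ≤ C * (∫ t in Set.Ioo (0:ℝ) 1,
              (t ^ ((n:ℝ) / ((p / (p - 1)) * (n - 1)) - 1 / (p / (p - 1))) * g t)
                ^ (p / (p - 1))) ^ (1 / (p / (p - 1))) := by
  classical
  set q : ℝ := p / (p - 1) with hq_def
  set α : ℝ := ((n:ℝ) - 1) / n with hα_def
  set β : ℝ := (n:ℝ) / (q * ((n:ℝ) - 1)) - 1 / q with hβ_def
  have hp1 : (0:ℝ) < p - 1 := by linarith
  have hn2 : (2:ℝ) ≤ (n:ℝ) := by exact_mod_cast hn
  have hn0 : (0:ℝ) < (n:ℝ) := by linarith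
  have hn1 : (0:ℝ) < (n:ℝ) - 1 := by linarith
  set r : ℝ := (n:ℝ) / ((n:ℝ) - 1) with hr_def
  set a : ℝ := r - 1 with ha_def
  have hq : 1 < q := by rw [hq_def]; exact (one_lt_div hp1).mpr (by linarith)
  have hq0 : (0:ℝ) < q := by linarith
  have hr1 : 1 < r := by rw [hr_def]; exact (one_lt_div hn1).mpr (by linarith)
  have hrq : r < q := by
    rw [hr_def, hq_def, div_lt_div_iff₀ hn1 hp1]; nlinarith
  have ha0 : 0 < a := by rw [ha_def]; linarith
  have haq : a < q - 1 := by rw [ha_def]; linarith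
  have hβq : β * q = a := by
    rw [hβ_def, ha_def, hr_def]; field_simp
  have hα0 : 0 < α := by rw [hα_def]; positivity
  have hαr : ∀ u : ℝ, 0 < u → (u ^ r) ^ α = u := by
    intro u hu
    rw [← Real.rpow_mul hu.le, show r * α = 1 by rw [hr_def, hα_def]; field_simp, Real.rpow_one]
  have hmem : ∀ t ∈ Set.Ioo (0:ℝ) 1, t ^ α ∈ Set.Ioo (0:ℝ) 1 := fun t ht =>
    ⟨Real.rpow_pos_of_pos ht.1 α, Real.rpow_lt_one ht.1.le ht.2 hα0⟩
  -- positivity of the constant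
  have hb2 : (a + q - 1) / 2 < q - 1 := by linarith
  have hKr : 0 < r * ((1 - (a + q - 1) / 2 / (q - 1))⁻¹ ^ (q - 1) * ((a + q - 1) / 2 - a)⁻¹) := by
    have h1 : 0 < 1 - (a + q - 1) / 2 / (q - 1) := by
      have := (div_lt_one (by linarith : (0:ℝ) < q - 1)).mpr hb2
      linarith
    have h2 : (0:ℝ) < (a + q - 1) / 2 - a := by linarith
    have h3 : (0:ℝ) < (1 - (a + q - 1) / 2 / (q - 1))⁻¹ ^ (q - 1) :=
      Real.rpow_pos_of_pos (by positivity) _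
    positivity
  refine ⟨1, (r * ((1 - (a + q - 1) / 2 / (q - 1))⁻¹ ^ (q - 1)
      * ((a + q - 1) / 2 - a)⁻¹)) ^ (1 / q), one_pos, Real.rpow_pos_of_pos hKr _, ?_⟩
  intro g hg hgant hg0
  set G : ℝ → ℝ≥0∞ := fun s => ENNReal.ofReal (g s) with hG_def
  set φ : ℝ → ℝ≥0∞ := fun u => ∫⁻ s in Set.Ioo (0:ℝ) u, G s with hφ_def
  have hGmeas : Measurable G := hg.ennreal_ofReal
  have hφmono : Monotone φ := fun u v huv =>
    lintegral_mono_set (Set.Ioo_subset_Ioo le_rfl huv)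
  have hφmeas : Measurable φ := hφmono.measurable
  have htα : Measurable fun t : ℝ => t ^ α := measurable_id.pow measurable_const
  have hinner : ∀ t ∈ Set.Ioo (0:ℝ) 1,
      (∫ s in Set.Ioo (0:ℝ) (t ^ α), g s) = (φ (t ^ α)).toReal := by
    intro t ht
    rw [integral_eq_lintegral_of_nonneg_ae ?_ hg.aestronglyMeasurable]
    · filter_upwards [ae_restrict_mem measurableSet_Ioo] with s hs
      exact hg0 s ⟨hs.1, hs.2.trans (hmem t ht).2⟩
  set Ft : ℝ → ℝ := fun t => ((t ^ α)⁻¹ * (φ (t ^ α)).toReal) ^ q with hFt_def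
  have hFtmeas : Measurable Ft :=
    ((htα.inv.mul ((hφmeas.comp htα).ennreal_toReal)).pow measurable_const)
  set Lint : ℝ≥0∞ := ∫⁻ t in Set.Ioo (0:ℝ) 1, (ENNReal.ofReal t) ^ a * G t ^ q with hLint_def
  set Iint : ℝ≥0∞ := ∫⁻ t in Set.Ioo (0:ℝ) 1, ENNReal.ofReal (Ft t) with hIint_def
  have hLHS : ∫ t in Set.Ioo (0:ℝ) 1, (t ^ β * g t) ^ q = Lint.toReal := by
    rw [integral_eq_lintegral_of_nonneg_ae ?_
      (show Measurable fun t : ℝ => (t ^ β * g t) ^ q from ((measurable_id'.pow measurable_const).mul hg).pow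
        measurable_const).aestronglyMeasurable]
    · congr 1
      refine setLIntegral_congr_fun measurableSet_Ioo (
        fun t ht => ?_)
      rw [Real.mul_rpow (Real.rpow_nonneg ht.1.le _) (hg0 t ht),
        ← Real.rpow_mul ht.1.le, hβq,
        ENNReal.ofReal_mul (Real.rpow_nonneg ht.1.le a),
        ← ENNReal.ofReal_rpow_of_pos ht.1,
        ← ENNReal.ofReal_rpow_of_nonneg (hg0 t ht) hq0.le]
    · filter_upwards [ae_restrict_mem measurableSet_Ioo] with t ht
      exact Real.rpow_nonneg (mul_nonneg (Real.rpow_nonneg ht.1.le β) (hg0 t ht)) q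
  have hRHS : (∫ t in Set.Ioo (0:ℝ) 1,
      ((t ^ α)⁻¹ * ∫ s in Set.Ioo (0:ℝ) (t ^ α), g s) ^ q) = Iint.toReal := by
    rw [setIntegral_congr_fun measurableSet_Ioo
      (fun t ht => by simp only [hinner t ht, hFt_def] : Set.EqOn
        (fun t => ((t ^ α)⁻¹ * ∫ s in Set.Ioo (0:ℝ) (t ^ α), g s) ^ q) Ft (Set.Ioo 0 1))]
    rw [integral_eq_lintegral_of_nonneg_ae ?_ hFtmeas.aestronglyMeasurable]
    · filter_upwards [ae_restrict_mem measurableSet_Ioo] with t ht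
      exact Real.rpow_nonneg
        (mul_nonneg (inv_nonneg.mpr (Real.rpow_nonneg ht.1.le α)) ENNReal.toReal_nonneg) q
  have hq1q : (0:ℝ) < 1 / q := by positivity
  have hnn_ae : 0 ≤ᵐ[volume.restrict (Set.Ioo (0:ℝ) 1)] g := by
    filter_upwards [ae_restrict_mem measurableSet_Ioo] with s hs using hg0 s hs
  have hφ1_iff : IntegrableOn g (Set.Ioo (0:ℝ) 1) ↔ φ 1 ≠ ⊤ := by
    constructor
    · intro h
      exact ((hasFiniteIntegral_iff_ofReal hnn_ae).mp h.2).ne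
    · intro h
      exact ⟨hg.aestronglyMeasurable,
        (hasFiniteIntegral_iff_ofReal hnn_ae).mpr (lt_top_iff_ne_top.mpr h)⟩
  rw [hLHS, hRHS]
  by_cases hgi : IntegrableOn g (Set.Ioo (0:ℝ) 1)
  · -- integrable case
    have hφfin : ∀ u : ℝ, u ≤ 1 → φ u ≠ ⊤ := by
      intro u hu htop
      exact (hφ1_iff.mp hgi) (top_le_iff.mp (htop ▸ hφmono hu))
    have hIJ : Iint = ∫⁻ t in Set.Ioo (0:ℝ) 1,
        ((ENNReal.ofReal (t ^ α))⁻¹ * φ (t ^ α)) ^ q := by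
      refine setLIntegral_congr_fun measurableSet_Ioo (
        fun t ht => ?_)
      have h1 : (0:ℝ) < t ^ α := (hmem t ht).1
      show ENNReal.ofReal (((t ^ α)⁻¹ * (φ (t ^ α)).toReal) ^ q) = _
      rw [← ENNReal.ofReal_rpow_of_nonneg
          (mul_nonneg (inv_nonneg.mpr h1.le) ENNReal.toReal_nonneg) hq0.le,
        ENNReal.ofReal_mul (inv_nonneg.mpr h1.le), ENNReal.ofReal_inv_of_pos h1,
        ENNReal.ofReal_toReal (hφfin _ (hmem t ht).2.le)]
    have hsub : ∫⁻ t in Set.Ioo (0:ℝ) 1, ((ENNReal.ofReal (t ^ α))⁻¹ * φ (t ^ α)) ^ q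
        = ∫⁻ u in Set.Ioo (0:ℝ) 1,
            ENNReal.ofReal (r * u ^ (r - 1)) * ((ENNReal.ofReal u)⁻¹ * φ u) ^ q := by
      rw [lintegral_subst_rpow r hr1 (fun t => ((ENNReal.ofReal (t ^ α))⁻¹ * φ (t ^ α)) ^ q)]
      exact setLIntegral_congr_fun measurableSet_Ioo (
        fun u hu => by simp only [hαr u hu.1])
    have hLI : Lint ≤ Iint := by
      rw [hIJ, hsub]
      refine setLIntegral_mono' measurableSet_Ioo fun u hu => ?_
      have hU0 : ENNReal.ofReal u ≠ 0 := by
        simp only [ne_eq, ENNReal.ofReal_eq_zero, not_le]; linarith [hu.1]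
      have hUtop : ENNReal.ofReal u ≠ ⊤ := ENNReal.ofReal_ne_top
      have h1 : ENNReal.ofReal u * G u ≤ φ u := by
        calc ENNReal.ofReal u * G u = ∫⁻ _ in Set.Ioo (0:ℝ) u, G u := by
              rw [setLIntegral_const, Real.volume_Ioo, sub_zero, mul_comm]
          _ ≤ ∫⁻ s in Set.Ioo (0:ℝ) u, G s := by
              refine setLIntegral_mono' measurableSet_Ioo fun s hs => ?_
              exact ENNReal.ofReal_le_ofReal
                (hgant ⟨hs.1, hs.2.trans hu.2⟩ hu (le_of_lt hs.2))
      have h2 : G u ≤ (ENNReal.ofReal u)⁻¹ * φ u := by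
        calc G u = (ENNReal.ofReal u)⁻¹ * (ENNReal.ofReal u * G u) := by
              rw [← mul_assoc, ENNReal.inv_mul_cancel hU0 hUtop, one_mul]
          _ ≤ (ENNReal.ofReal u)⁻¹ * φ u := mul_le_mul_right h1 _
      refine mul_le_mul' ?_ (ENNReal.rpow_le_rpow h2 hq0.le)
      rw [ha_def, ENNReal.ofReal_rpow_of_pos hu.1]
      exact ENNReal.ofReal_le_ofReal
        (le_mul_of_one_le_left (Real.rpow_nonneg hu.1.le _) hr1.le)
    have hup : Iint ≤ ENNReal.ofReal r
        * (ENNReal.ofReal ((1 - (a + q - 1) / 2 / (q - 1))⁻¹ ^ (q - 1))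
            * ENNReal.ofReal (((a + q - 1) / 2 - a)⁻¹) * Lint) := by
      rw [hIJ, hsub]
      have hpoint : ∀ u ∈ Set.Ioo (0:ℝ) 1,
          ENNReal.ofReal (r * u ^ (r - 1)) * ((ENNReal.ofReal u)⁻¹ * φ u) ^ q
            = ENNReal.ofReal r * ((ENNReal.ofReal u) ^ (a - q) * (φ u) ^ q) := by
        intro u hu
        have hU0 : ENNReal.ofReal u ≠ 0 := by
          simp only [ne_eq, ENNReal.ofReal_eq_zero, not_le]; linarith [hu.1]
        have hUtop : ENNReal.ofReal u ≠ ⊤ := ENNReal.ofReal_ne_top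
        rw [ENNReal.ofReal_mul (by linarith : (0:ℝ) ≤ r),
          ENNReal.mul_rpow_of_nonneg _ _ hq0.le, ENNReal.inv_rpow,
          ← ENNReal.rpow_neg_one (ENNReal.ofReal u ^ q),
          ← ENNReal.rpow_mul, ← ENNReal.ofReal_rpow_of_pos hu.1,
          mul_assoc, ← mul_assoc (ENNReal.ofReal u ^ (r - 1)),
          ← ENNReal.rpow_add _ _ hU0 hUtop]
        rw [show r - 1 + q * -1 = a - q by rw [ha_def]; ring]
      rw [setLIntegral_congr_fun measurableSet_Ioo hpoint,
        lintegral_const_mul' _ _ ENNReal.ofReal_ne_top]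
      exact mul_le_mul_right (hardy_core q a hq ha0 haq G hGmeas) _
    by_cases hLtop : Lint = ⊤
    · have hItop : Iint = ⊤ := top_le_iff.mp (hLtop ▸ hLI)
      rw [hLtop, hItop, ENNReal.toReal_top, Real.zero_rpow (ne_of_gt hq1q)]
      constructor <;> simp [mul_nonneg (Real.rpow_pos_of_pos hKr _).le le_rfl]
    · have hKne : ENNReal.ofReal ((1 - (a + q - 1) / 2 / (q - 1))⁻¹ ^ (q - 1))
          * ENNReal.ofReal (((a + q - 1) / 2 - a)⁻¹) * Lint ≠ ⊤ :=
        ENNReal.mul_ne_top (ENNReal.mul_ne_top ENNReal.ofReal_ne_top ENNReal.ofReal_ne_top)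
          hLtop
      have hIfin : Iint ≠ ⊤ :=
        ne_top_of_le_ne_top (ENNReal.mul_ne_top ENNReal.ofReal_ne_top hKne) hup
      constructor
      · rw [one_mul]
        exact Real.rpow_le_rpow ENNReal.toReal_nonneg
          (ENNReal.toReal_mono hIfin hLI) hq1q.le
      · have h4 : Iint.toReal ≤ (r * ((1 - (a + q - 1) / 2 / (q - 1))⁻¹ ^ (q - 1)
            * (((a + q - 1) / 2 - a)⁻¹))) * Lint.toReal := by
          have h5 := ENNReal.toReal_mono (ENNReal.mul_ne_top ENNReal.ofReal_ne_top hKne) hup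
          rw [ENNReal.toReal_mul, ENNReal.toReal_mul, ENNReal.toReal_mul,
            ENNReal.toReal_ofReal (by linarith : (0:ℝ) ≤ r),
            ENNReal.toReal_ofReal (le_of_lt (Real.rpow_pos_of_pos (inv_pos.mpr (by
              have := (div_lt_one (by linarith : (0:ℝ) < q - 1)).mpr hb2
              linarith)) _)),
            ENNReal.toReal_ofReal (le_of_lt (by
              have : (0:ℝ) < (a + q - 1) / 2 - a := by linarith
              positivity))] at h5
          calc Iint.toReal ≤ _ := h5
            _ = _ := by ring
        calc Iint.toReal ^ (1 / q)
            ≤ ((r * ((1 - (a + q - 1) / 2 / (q - 1))⁻¹ ^ (q - 1)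
                * (((a + q - 1) / 2 - a)⁻¹))) * Lint.toReal) ^ (1 / q) :=
              Real.rpow_le_rpow ENNReal.toReal_nonneg h4 hq1q.le
          _ = _ := Real.mul_rpow hKr.le ENNReal.toReal_nonneg
  · -- non-integrable case
    have hφtop : ∀ u ∈ Set.Ioo (0:ℝ) 1, φ u = ⊤ := by
      intro u hu
      by_contra htop
      refine hgi (hφ1_iff.mpr ?_)
      have hsplit : φ 1 ≤ φ u + ∫⁻ s in Set.Ico u 1, G s := by
        refine le_trans (lintegral_mono_set ?_) (lintegral_union_le _ _ _)
        intro s hs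
        by_cases h : s < u
        · exact Or.inl ⟨hs.1, h⟩
        · exact Or.inr ⟨not_lt.mp h, hs.2⟩
      have hIco : ∫⁻ s in Set.Ico u 1, G s ≤ G u * ENNReal.ofReal (1 - u) := by
        calc ∫⁻ s in Set.Ico u 1, G s ≤ ∫⁻ _ in Set.Ico u 1, G u := by
              refine setLIntegral_mono' measurableSet_Ico fun s hs => ?_
              exact ENNReal.ofReal_le_ofReal
                (hgant hu ⟨lt_of_lt_of_le hu.1 hs.1, hs.2⟩ hs.1)
          _ = G u * ENNReal.ofReal (1 - u) := by
              rw [setLIntegral_const, Real.volume_Ico]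
      intro h1top
      rw [h1top] at hsplit
      rcases ENNReal.add_eq_top.mp (top_le_iff.mp hsplit) with h | h
      · exact htop h
      · exact (ne_top_of_le_ne_top
          (ENNReal.mul_ne_top ENNReal.ofReal_ne_top ENNReal.ofReal_ne_top) hIco) h
    have hI0 : Iint = 0 := by
      have hz : ∀ t ∈ Set.Ioo (0:ℝ) 1, ENNReal.ofReal (Ft t) = 0 := by
        intro t ht
        simp only [hFt_def]
        rw [hφtop _ (hmem t ht), ENNReal.toReal_top, mul_zero,
          Real.zero_rpow (ne_of_gt hq0), ENNReal.ofReal_zero]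
      rw [hIint_def, setLIntegral_congr_fun measurableSet_Ioo
        hz, lintegral_zero]
    have hLtop : Lint = ⊤ := by
      by_contra hL
      have h5 := holder_step q a a hq ha0 haq G hGmeas 1 one_pos
      have h6 : (φ 1) ^ q ≠ ⊤ := by
        refine ne_top_of_le_ne_top (ENNReal.mul_ne_top hL
          (ENNReal.rpow_ne_top_of_nonneg (by linarith) ENNReal.ofReal_ne_top)) h5
      have h7 : φ 1 ≠ ⊤ := by
        intro h
        rw [h, ENNReal.top_rpow_of_pos hq0] at h6
        exact h6 rfl
      exact hgi (hφ1_iff.mpr h7)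
    rw [hI0, hLtop, ENNReal.toReal_top, ENNReal.toReal_zero,
      Real.zero_rpow (ne_of_gt hq1q)]
    constructor <;> simp
end

section
/- Let $X_1(I^{n-1})$ and $X_2(I^{n-1})$ be rearrangement invariant Banach function spaces. Then the mixed norm embedding $\mathcal{R}(X_1, L^\infty) \hookrightarrow \mathcal{R}(X_2, L^\infty)$ holds if and only if $X_1(I^{n-1}) \hookrightarrow X_2(I^{n-1})$. -/
open MeasureTheory Set ENNReal NNReal

noncomputable def cube (m : ℕ) : Set (Fin m → ℝ) := Set.univ.pi fun _ => Set.Ioo (0:ℝ) 1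
noncomputable def μcube (m : ℕ) : Measure (Fin m → ℝ) := volume.restrict (cube m)
/-- Lebesgue measure on `(0,1)`. -/
noncomputable def μ01 : Measure ℝ := volume.restrict (Set.Ioo (0:ℝ) 1)

/-- Decreasing rearrangement of a nonnegative (extended-real-valued) function. -/
noncomputable def rearr {α : Type*} [MeasurableSpace α] (μ : Measure α) (f : α → ℝ≥0∞) (t : ℝ) : ℝ≥0∞ :=
  sInf {a : ℝ≥0∞ | μ {x | a < f x} ≤ ENNReal.ofReal t}

/-- A rearrangement invariant Banach function norm (on nonnegative measurable functions
with values in `[0,∞]`, in the sense of Bennett–Sharpley): properties (A1)–(A5) together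
with rearrangement invariance. -/
structure RINorm {α : Type*} [MeasurableSpace α] (μ : Measure α) where
  N : (α → ℝ≥0∞) → ℝ≥0∞
  eq_zero : ∀ f : α → ℝ≥0∞, Measurable f → (N f = 0 ↔ f =ᵐ[μ] 0)
  add_le : ∀ f g : α → ℝ≥0∞, Measurable f → Measurable g → N (f + g) ≤ N f + N g
  smul : ∀ (c : ℝ≥0) (f : α → ℝ≥0∞), N (fun x => c * f x) = c * N f
  mono : ∀ f g : α → ℝ≥0∞, (∀ᵐ x ∂μ, g x ≤ f x) → N g ≤ N f
  sup_seq : ∀ f : ℕ → α → ℝ≥0∞, (∀ j, Measurable (f j)) → Monotone f →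
    N (fun x => ⨆ j, f j x) = ⨆ j, N (f j)
  const_lt : N (fun _ => 1) < ⊤
  int_le : ∃ c : ℝ≥0∞, c < ⊤ ∧ ∀ f : α → ℝ≥0∞, Measurable f → ∫⁻ x, f x ∂μ ≤ c * N f
  ri : ∀ f g : α → ℝ≥0∞, Measurable f → Measurable g →
    (∀ a : ℝ≥0∞, μ {x | a < f x} = μ {x | a < g x}) → N f = N g

/-- `ψ_k(f, L^∞)(x̂_k) = esssup_{x_k ∈ I} f(x̂_k, x_k)`. -/
noncomputable def psiK {n : ℕ} (f : (Fin (n+1) → ℝ) → ℝ≥0∞) (k : Fin (n+1)) (y : Fin n → ℝ) : ℝ≥0∞ :=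
  essSup (fun s : ℝ => f (k.insertNth s y)) (volume.restrict (Set.Ioo (0:ℝ) 1))

/-- The mixed norm `‖f‖_{R(X,L^∞)} = ∑_k ‖ψ_k(f,L^∞)‖_{X(I^{n-1})}`. -/
noncomputable def mixedNorm {n : ℕ} (X : RINorm (μcube n)) (f : (Fin (n+1) → ℝ) → ℝ≥0∞) : ℝ≥0∞ :=
  ∑ k : Fin (n+1), X.N (psiK f k)

/-! ### Auxiliary lemmas -/

section Aux

lemma mu01_ne_zero : (volume.restrict (Set.Ioo (0:ℝ) 1)) ≠ 0 := by
  simp [Measure.restrict_eq_zero, Real.volume_Ioo]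

lemma essSup_le_iff' {α : Type*} [MeasurableSpace α] (μ : Measure α) (g : α → ℝ≥0∞) (a : ℝ≥0∞) :
    essSup g μ ≤ a ↔ ∀ᵐ s ∂μ, g s ≤ a :=
  ⟨fun h => (ENNReal.ae_le_essSup g).mono fun s hs => hs.trans h,
   fun h => essSup_le_of_ae_le a h⟩

lemma lt_essSup_iff' {α : Type*} [MeasurableSpace α] (μ : Measure α) (g : α → ℝ≥0∞) (a : ℝ≥0∞) :
    a < essSup g μ ↔ μ {s | a < g s} ≠ 0 := by
  rw [← not_le, essSup_le_iff', ae_iff]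
  simp only [not_le, ne_eq]

lemma measurable_insertNth {n : ℕ} (k : Fin (n+1)) :
    Measurable fun p : (Fin n → ℝ) × ℝ => (k.insertNth p.2 p.1 : Fin (n+1) → ℝ) := by
  have h := (MeasurableEquiv.piFinSuccAbove (fun _ : Fin (n+1) => ℝ) k).symm.measurable
  exact h.comp (measurable_snd.prodMk (measurable_pi_iff.mpr fun i => (measurable_pi_apply i).comp measurable_fst))

lemma measurable_psiK {n : ℕ} {f : (Fin (n+1) → ℝ) → ℝ≥0∞} (hf : Measurable f) (k : Fin (n+1)) :
    Measurable (psiK f k) := by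
  apply measurable_of_Ioi
  intro a
  have hs : MeasurableSet {p : (Fin n → ℝ) × ℝ | a < f (k.insertNth p.2 p.1)} :=
    (hf.comp (measurable_insertNth k)) measurableSet_Ioi
  have hm : Measurable fun y : Fin n → ℝ =>
      (volume.restrict (Set.Ioo (0:ℝ) 1)) {s : ℝ | a < f (k.insertNth s y)} := by
    have := measurable_measure_prodMk_left (ν := volume.restrict (Set.Ioo (0:ℝ) 1)) hs
    exact this
  have hset : psiK f k ⁻¹' Set.Ioi a =
      {y : Fin n → ℝ | (volume.restrict (Set.Ioo (0:ℝ) 1)) {s : ℝ | a < f (k.insertNth s y)} ≠ 0} := by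
    ext y
    simp only [Set.mem_preimage, Set.mem_Ioi, Set.mem_setOf_eq, psiK]
    exact lt_essSup_iff' _ _ _
  rw [hset]
  exact hm (measurableSet_singleton 0) |>.compl

lemma volume_cube (m : ℕ) : volume (cube m) = 1 := by
  rw [cube, volume_pi_pi]
  simp [Real.volume_Ioo]

end Aux

section Forward

variable {n : ℕ} (g : (Fin n → ℝ) → ℝ≥0∞)

/-- distribution function of `g` -/
noncomputable def distg (a : ℝ≥0∞) : ℝ≥0∞ := μcube n {y | a < g y}

lemma distg_le_one (a : ℝ≥0∞) : distg g a ≤ 1 := by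
  calc distg g a ≤ μcube n Set.univ := measure_mono (Set.subset_univ _)
  _ = 1 := by rw [μcube, Measure.restrict_apply_univ, volume_cube]

lemma distg_anti : Antitone (distg g) := by
  intro a b hab
  exact measure_mono fun y hy => lt_of_le_of_lt hab hy

lemma distg_right_cont {a t : ℝ≥0∞} (h : ∀ b, a < b → distg g b ≤ t) : distg g a ≤ t := by
  rcases eq_or_ne a ⊤ with rfl | ha
  · have : {y | (⊤:ℝ≥0∞) < g y} = ∅ := by
      ext y; simp
    simp [distg, this]
  · have hU : {y | a < g y} = ⋃ m : ℕ, {y | a + (m:ℝ≥0∞)⁻¹ < g y} := by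
      ext y
      simp only [Set.mem_setOf_eq, Set.mem_iUnion]
      constructor
      · intro hy
        rcases eq_or_ne (g y) ⊤ with hgy | hgy
        · exact ⟨1, by rw [hgy]; exact ENNReal.add_lt_top.mpr ⟨ha.lt_top, by simp⟩⟩
        · obtain ⟨m, hm⟩ := ENNReal.exists_inv_nat_lt (a := g y - a) (by
            simpa [tsub_eq_zero_iff_le] using hy.not_ge)
          refine ⟨m, ?_⟩
          calc a + (m:ℝ≥0∞)⁻¹ < a + (g y - a) := ENNReal.add_lt_add_left ha hm
          _ = g y := add_tsub_cancel_of_le hy.le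
      · rintro ⟨m, hm⟩
        exact lt_of_le_of_lt le_self_add hm
    have hmono : Monotone fun m : ℕ => {y | a + (m:ℝ≥0∞)⁻¹ < g y} := by
      intro m m' hmm y hy
      refine lt_of_le_of_lt (add_le_add_right ?_ a) hy
      exact ENNReal.inv_le_inv.mpr (Nat.cast_le.mpr hmm)
    have hsup : distg g a = ⨆ m : ℕ, distg g (a + (m:ℝ≥0∞)⁻¹) := by
      rw [distg, hU]
      exact hmono.measure_iUnion
    rw [hsup]
    refine iSup_le fun m => h _ ?_
    exact ENNReal.lt_add_right ha (by simp)

/-- the decreasing rearrangement of `g` on `(0,1)` -/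
noncomputable def Gr (t : ℝ) : ℝ≥0∞ := rearr (μcube n) g t

lemma Gr_gt_iff (a : ℝ≥0∞) (t : ℝ) : a < Gr g t ↔ ENNReal.ofReal t < distg g a := by
  constructor
  · intro h
    by_contra hd
    push_neg at hd
    exact absurd (sInf_le (by exact hd : a ∈ {b : ℝ≥0∞ | μcube n {y | b < g y} ≤ ENNReal.ofReal t}))
      (not_le.mpr h)
  · intro hd
    by_contra h
    push_neg at h
    have hall : ∀ b, a < b → distg g b ≤ ENNReal.ofReal t := by
      intro b hb
      have hlt : sInf {c : ℝ≥0∞ | μcube n {y | c < g y} ≤ ENNReal.ofReal t} < b :=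
        lt_of_le_of_lt h hb
      obtain ⟨c, hc, hcb⟩ := sInf_lt_iff.mp hlt
      exact le_trans (distg_anti g hcb.le) hc
    exact absurd (distg_right_cont g hall) (not_le.mpr hd)

lemma Gr_anti : Antitone (Gr g) := by
  intro t t' htt'
  apply sInf_le_sInf
  intro b hb
  exact le_trans hb (ENNReal.ofReal_le_ofReal htt')

lemma measurable_Gr : Measurable (Gr g) := by
  apply measurable_of_Ioi
  intro a
  have h : Gr g ⁻¹' Set.Ioi a = ENNReal.ofReal ⁻¹' Set.Iio (distg g a) := by
    ext t
    simpa [Set.mem_preimage] using Gr_gt_iff g a t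
  rw [h]
  exact ENNReal.measurable_ofReal measurableSet_Iio

variable [NeZero n]

lemma dist_h1 (a : ℝ≥0∞) :
    μcube n {y | a < Gr g (y 0)} = distg g a := by
  have hiff : {y : Fin n → ℝ | a < Gr g (y 0)} = {y | ENNReal.ofReal (y 0) < distg g a} := by
    ext y; exact Gr_gt_iff g a (y 0)
  rw [hiff]
  have hda_top : distg g a ≠ ⊤ := (lt_of_le_of_lt (distg_le_one g a) one_lt_top).ne
  have hSmeas : MeasurableSet {y : Fin n → ℝ | ENNReal.ofReal (y 0) < distg g a} :=
    measurableSet_lt (ENNReal.measurable_ofReal.comp (measurable_pi_apply 0)) measurable_const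
  rw [μcube, Measure.restrict_apply hSmeas]
  have hset : {y : Fin n → ℝ | ENNReal.ofReal (y 0) < distg g a} ∩ cube n =
      Set.univ.pi (fun i : Fin n => if i = 0 then
        Set.Ioo (0:ℝ) (min ((distg g a).toReal) 1) else Set.Ioo (0:ℝ) 1) := by
    ext y
    simp only [Set.mem_inter_iff, Set.mem_setOf_eq, cube, Set.mem_pi, Set.mem_univ, true_implies]
    constructor
    · rintro ⟨h1, h2⟩
      intro i
      by_cases hi : i = 0
      · subst hi
        rw [if_pos rfl]
        have h20 := h2 0
        refine ⟨h20.1, lt_min ?_ h20.2⟩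
        rw [← ENNReal.ofReal_lt_iff_lt_toReal h20.1.le hda_top]
        exact h1
      · rw [if_neg hi]
        exact h2 i
    · intro h
      have h0 := h 0
      rw [if_pos rfl] at h0
      constructor
      · rw [ENNReal.ofReal_lt_iff_lt_toReal h0.1.le hda_top]
        exact lt_of_lt_of_le h0.2 (min_le_left _ _)
      · intro i
        by_cases hi : i = 0
        · subst hi
          exact ⟨h0.1, lt_of_lt_of_le h0.2 (min_le_right _ _)⟩
        · have hii := h i
          rw [if_neg hi] at hii
          exact hii
  rw [hset, volume_pi_pi]
  have hcalc : ∀ i : Fin n, volume (if i = 0 then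
      Set.Ioo (0:ℝ) (min ((distg g a).toReal) 1) else Set.Ioo (0:ℝ) 1)
      = if i = 0 then ENNReal.ofReal (min ((distg g a).toReal) 1) else 1 := by
    intro i
    by_cases hi : i = 0 <;> simp [hi, Real.volume_Ioo]
  rw [Finset.prod_congr rfl fun i _ => hcalc i]
  rw [Finset.prod_ite_eq' Finset.univ (0 : Fin n)
    (fun _ => ENNReal.ofReal (min ((distg g a).toReal) 1))]
  simp only [Finset.mem_univ, if_pos]
  have hmin : min ((distg g a).toReal) 1 = (distg g a).toReal := by
    apply min_eq_left
    calc (distg g a).toReal ≤ (1:ℝ≥0∞).toReal :=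
      ENNReal.toReal_mono one_ne_top (distg_le_one g a)
    _ = 1 := by simp
  rw [hmin, ENNReal.ofReal_toReal hda_top]

omit [NeZero n] in
lemma essSup_Gr_shift (c : ℝ) :
    essSup (fun s : ℝ => Gr g (s + c)) (volume.restrict (Set.Ioo (0:ℝ) 1)) = Gr g c := by
  apply le_antisymm
  · refine essSup_le_of_ae_le _ ?_
    filter_upwards [ae_restrict_mem measurableSet_Ioo] with s hs
    exact Gr_anti g (le_add_of_nonneg_left hs.1.le)
  · apply le_of_forall_lt
    intro a ha
    rw [lt_essSup_iff']
    have hd : ENNReal.ofReal c < distg g a := (Gr_gt_iff g a c).mp ha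
    have hda_top : distg g a ≠ ⊤ := (lt_of_le_of_lt (distg_le_one g a) one_lt_top).ne
    set r : ℝ := (distg g a).toReal with hr
    have hcr : c < r := by
      rcases le_or_gt 0 c with hc | hc
      · exact (ENNReal.ofReal_lt_iff_lt_toReal hc hda_top).mp hd
      · have hr0 : 0 < r := by
          have hne : distg g a ≠ 0 := by
            intro h0
            rw [h0] at hd
            exact absurd hd (by simp)
          exact ENNReal.toReal_pos hne hda_top
        linarith
    set m : ℝ := min 1 (r - c) with hm
    have hm0 : 0 < m := lt_min one_pos (by linarith)
    have hsub : Set.Ioo (0:ℝ) m ⊆ {s : ℝ | a < Gr g (s + c)} := by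
      intro s hs
      rw [Set.mem_setOf_eq, Gr_gt_iff]
      rcases le_or_gt (s + c) 0 with hsc | hsc
      · rw [ENNReal.ofReal_eq_zero.mpr hsc]
        exact lt_of_le_of_lt zero_le hd
      · rw [ENNReal.ofReal_lt_iff_lt_toReal hsc.le hda_top]
        have hsr : s < r - c := lt_of_lt_of_le hs.2 (min_le_right _ _)
        linarith
    intro h0
    have hle : (volume.restrict (Set.Ioo (0:ℝ) 1)) (Set.Ioo (0:ℝ) m) = 0 :=
      measure_mono_null hsub h0
    rw [Measure.restrict_apply measurableSet_Ioo] at hle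
    have hint : Set.Ioo (0:ℝ) m ∩ Set.Ioo (0:ℝ) 1 = Set.Ioo (0:ℝ) m := by
      apply Set.inter_eq_left.mpr
      intro s hs
      exact ⟨hs.1, lt_of_lt_of_le hs.2 (min_le_left _ _)⟩
    rw [hint, Real.volume_Ioo] at hle
    simp only [sub_zero] at hle
    exact absurd hle (by positivity)

end Forward

/-- Embeddings between mixed norm spaces `R(X₁,L^∞) ↪ R(X₂,L^∞)` hold if and only if
`X₁(I^{n-1}) ↪ X₂(I^{n-1})` (ambient dimension `n+1 ≥ 2`). -/
theorem mixed_embedding_iff (n : ℕ) (hn : 1 ≤ n)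
    (X₁ X₂ : RINorm (μcube n)) :
    (∃ C : ℝ≥0, ∀ f : (Fin (n+1) → ℝ) → ℝ≥0∞, Measurable f →
        mixedNorm X₂ f ≤ C * mixedNorm X₁ f)
      ↔ (∃ C : ℝ≥0, ∀ g : (Fin n → ℝ) → ℝ≥0∞, Measurable g → X₂.N g ≤ C * X₁.N g) := by
  have : NeZero n := ⟨by omega⟩
  constructor
  · rintro ⟨C, hC⟩
    refine ⟨C * (n + 1), fun g hg => ?_⟩
    set G : ℝ → ℝ≥0∞ := Gr g with hG
    have hGmeas : Measurable G := measurable_Gr g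
    set f : (Fin (n+1) → ℝ) → ℝ≥0∞ := fun x => G (x 0 + x 1) with hf
    have hfmeas : Measurable f :=
      hGmeas.comp ((measurable_pi_apply 0).add (measurable_pi_apply 1))
    set h1 : (Fin n → ℝ) → ℝ≥0∞ := fun y => G (y 0) with hh1
    have hh1meas : Measurable h1 := hGmeas.comp (measurable_pi_apply 0)
    -- ψ_0 f = h1
    have hsa00 : (0 : Fin (n+1)).succAbove (0 : Fin n) = 1 := by
      rw [Fin.succAbove_of_le_castSucc _ _ (by simp)]
      ext
      simp [Fin.val_succ]
    have hins01 : ∀ (s : ℝ) (y : Fin n → ℝ), ((0 : Fin (n+1)).insertNth s y : Fin (n+1) → ℝ) 1 = y 0 := by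
      intro s y
      rw [← hsa00, Fin.insertNth_apply_succAbove]
    have hpsi0 : psiK f 0 = h1 := by
      funext y
      rw [psiK]
      have heq : (fun s : ℝ => f ((0 : Fin (n+1)).insertNth s y)) = fun s => G (s + y 0) := by
        funext s
        simp only [hf]
        rw [Fin.insertNth_apply_same, hins01]
      rw [heq]
      exact essSup_Gr_shift g (y 0)
    -- ψ_1 f = h1
    have h1ne0 : (1 : Fin (n+1)) ≠ 0 := by
      intro h
      have hcv := congrArg Fin.val h
      simp at hcv
      omega
    have hsa10 : (1 : Fin (n+1)).succAbove (0 : Fin n) = 0 := by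
      rw [Fin.succAbove_of_castSucc_lt _ _ (by
        rw [Fin.lt_iff_val_lt_val]
        simp [Nat.mod_eq_of_lt (show 1 < n+1 by omega)])]
      ext
      simp
    have hins10 : ∀ (s : ℝ) (y : Fin n → ℝ), ((1 : Fin (n+1)).insertNth s y : Fin (n+1) → ℝ) 0 = y 0 := by
      intro s y
      rw [← hsa10, Fin.insertNth_apply_succAbove]
    have hpsi1 : psiK f 1 = h1 := by
      funext y
      rw [psiK]
      have heq : (fun s : ℝ => f ((1 : Fin (n+1)).insertNth s y)) = fun s => G (s + y 0) := by
        funext s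
        simp only [hf]
        rw [hins10, Fin.insertNth_apply_same, add_comm (y 0) s]
      rw [heq]
      exact essSup_Gr_shift g (y 0)
    -- ψ_k f for k ≥ 2
    have hpsik : ∀ k : Fin (n+1), 2 ≤ (k : ℕ) →
        psiK f k = fun y => G (y 0 + y (1 : Fin n)) := by
      intro k hk
      have hn2 : 2 ≤ n := by
        have := k.isLt
        omega
      have hk0 : (Fin.castSucc (0 : Fin n)) < k := by
        rw [Fin.lt_iff_val_lt_val]
        simp only [Fin.coe_castSucc, Fin.val_zero]
        omega
      have hv1 : ((1 : Fin n) : ℕ) = 1 := by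
        rw [Fin.val_one']
        exact Nat.mod_eq_of_lt (by omega)
      have hk1 : (Fin.castSucc (1 : Fin n)) < k := by
        rw [Fin.lt_iff_val_lt_val]
        simp only [Fin.coe_castSucc, hv1]
        omega
      have hsak0 : k.succAbove (0 : Fin n) = 0 := by
        rw [Fin.succAbove_of_castSucc_lt _ _ hk0]
        ext
        simp
      have hsak1 : k.succAbove (1 : Fin n) = 1 := by
        rw [Fin.succAbove_of_castSucc_lt _ _ hk1]
        ext
        rw [Fin.coe_castSucc, hv1, Fin.val_one', Nat.mod_eq_of_lt (by omega)]
      funext y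
      rw [psiK]
      have heq : (fun s : ℝ => f (k.insertNth s y)) = fun _ => G (y 0 + y (1 : Fin n)) := by
        funext s
        simp only [hf]
        rw [show (k.insertNth s y : Fin (n+1) → ℝ) 0 = y 0 from by
            rw [← hsak0, Fin.insertNth_apply_succAbove],
          show (k.insertNth s y : Fin (n+1) → ℝ) 1 = y (1 : Fin n) from by
            rw [← hsak1, Fin.insertNth_apply_succAbove]]
      rw [heq]
      exact essSup_const _ mu01_ne_zero
    -- norms
    have hNh1₁ : X₁.N h1 = X₁.N g := X₁.ri h1 g hh1meas hg (fun a => dist_h1 g a)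
    have hNh1₂ : X₂.N h1 = X₂.N g := X₂.ri h1 g hh1meas hg (fun a => dist_h1 g a)
    have hcubeM : MeasurableSet (cube n) :=
      MeasurableSet.univ_pi fun _ => measurableSet_Ioo
    have hbound : ∀ k : Fin (n+1), X₁.N (psiK f k) ≤ X₁.N g := by
      intro k
      by_cases hk0 : k = 0
      · rw [hk0, hpsi0, hNh1₁]
      by_cases hk1 : k = 1
      · rw [hk1, hpsi1, hNh1₁]
      · have hk2 : 2 ≤ (k : ℕ) := by
          have hv0 : (k : ℕ) ≠ 0 := fun h => hk0 (by
            apply Fin.ext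
            simp [h])
          have hv1 : (k : ℕ) ≠ 1 := fun h => hk1 (by
            apply Fin.ext
            simp [h, Fin.val_one', Nat.mod_eq_of_lt (show 1 < n+1 by omega)])
          omega
        rw [hpsik k hk2]
        calc X₁.N (fun y => G (y 0 + y (1 : Fin n))) ≤ X₁.N h1 := by
              apply X₁.mono
              rw [μcube]
              filter_upwards [ae_restrict_mem hcubeM] with y hy
              have hy1 : y (1 : Fin n) ∈ Set.Ioo (0:ℝ) 1 := hy (1 : Fin n) (Set.mem_univ _)
              exact Gr_anti g (le_add_of_nonneg_right hy1.1.le)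
          _ = X₁.N g := hNh1₁
    have Hmix : mixedNorm X₂ f ≤ C * mixedNorm X₁ f := hC f hfmeas
    have H1 : X₂.N g ≤ mixedNorm X₂ f := by
      rw [← hNh1₂, ← hpsi0, mixedNorm]
      exact Finset.single_le_sum (f := fun k => X₂.N (psiK f k))
        (fun _ _ => zero_le) (Finset.mem_univ 0)
    have H2 : mixedNorm X₁ f ≤ (n+1 : ℝ≥0∞) * X₁.N g := by
      rw [mixedNorm]
      calc ∑ k : Fin (n+1), X₁.N (psiK f k) ≤ ∑ _k : Fin (n+1), X₁.N g :=
            Finset.sum_le_sum fun k _ => hbound k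
        _ = (n+1 : ℝ≥0∞) * X₁.N g := by
            rw [Finset.sum_const, Finset.card_univ, Fintype.card_fin, nsmul_eq_mul]
            push_cast
            ring
    calc X₂.N g ≤ C * ((n+1 : ℝ≥0∞) * X₁.N g) :=
          le_trans H1 (le_trans Hmix (mul_le_mul_right H2 C))
      _ = (C * (n + 1) : ℝ≥0) * X₁.N g := by
          push_cast
          ring
  · rintro ⟨C, hC⟩
    refine ⟨C, fun f hf => ?_⟩
    rw [mixedNorm, mixedNorm, Finset.mul_sum]
    exact Finset.sum_le_sum fun k _ => hC _ (measurable_psiK hf k)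
end

section
/- Let $X(I^{n-1})$ and $Z(I^n)$ be rearrangement invariant Banach function spaces ($|I|=1$, $n \ge 2$). Then $Z(I^n) \hookrightarrow \mathcal{R}(X, L^\infty)$ holds if and only if $Z(I^n) = L^\infty(I^n)$ (with equivalent norms). In particular, a mixed norm space $\mathcal{R}(X, L^\infty)$ is itself a rearrangement invariant space if and only if $X = L^\infty(I^{n-1})$, in which case $\mathcal{R}(X,L^\infty) = L^\infty(I^n)$. -/
open MeasureTheory Set ENNReal NNReal

lemma measurableSet_cube (m : ℕ) : MeasurableSet (cube m) :=
  MeasurableSet.univ_pi fun _ => measurableSet_Ioo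

lemma μcube_univ (m : ℕ) : μcube m Set.univ = 1 := by
  rw [μcube, Measure.restrict_apply_univ, volume_cube]

lemma insertNth_mem_pi {n : ℕ} (k : Fin (n+1)) (s : ℝ) (y : Fin n → ℝ)
    (P : Fin (n+1) → Set ℝ) :
    k.insertNth s y ∈ Set.univ.pi P ↔ s ∈ P k ∧ y ∈ Set.univ.pi (fun i => P (k.succAbove i)) := by
  simp only [Set.mem_univ_pi]
  constructor
  · intro h
    refine ⟨by simpa using h k, fun i => by simpa using h (k.succAbove i)⟩
  · rintro ⟨h1, h2⟩ j
    rcases eq_or_ne j k with rfl | hj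
    · simpa using h1
    · obtain ⟨i, rfl⟩ := Fin.exists_succAbove_eq hj
      simpa using h2 i

lemma insertNth_mem_cube {n : ℕ} (k : Fin (n+1)) (s : ℝ) (y : Fin n → ℝ) :
    k.insertNth s y ∈ cube (n+1) ↔ s ∈ Set.Ioo (0:ℝ) 1 ∧ y ∈ cube n := by
  simpa [cube] using insertNth_mem_pi k s y (fun _ => Set.Ioo (0:ℝ) 1)

/-- If the set has positive measure, the essSup of its indicator is at least 1. -/
lemma one_le_essSup_indicator {α : Type*} [MeasurableSpace α] (μ : Measure α)
    (A : Set α) (hA : μ A ≠ 0) :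
    1 ≤ essSup (A.indicator fun _ => (1:ℝ≥0∞)) μ := by
  by_contra h
  push_neg at h
  have hae := ae_le_essSup (μ := μ) (A.indicator fun _ => (1:ℝ≥0∞))
  have : μ {x | ¬ (A.indicator (fun _ => (1:ℝ≥0∞)) x ≤ essSup (A.indicator fun _ => (1:ℝ≥0∞)) μ)} = 0 :=
    ae_iff.mp hae
  refine hA (measure_mono_null ?_ this)
  intro x hx
  simp only [Set.mem_setOf_eq, Set.indicator_of_mem hx, not_le]
  exact h

lemma measure_lt_indicator {α : Type*} [MeasurableSpace α] (μ : Measure α) (S : Set α)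
    (a : ℝ≥0∞) :
    μ {x | a < S.indicator (fun _ => (1:ℝ≥0∞)) x} = if a < 1 then μ S else 0 := by
  split_ifs with h
  · congr 1
    ext x
    by_cases hx : x ∈ S <;> simp [Set.indicator_of_mem, Set.indicator_of_notMem, hx, h]
  · convert measure_empty (μ := μ)
    ext x
    push_neg at h
    by_cases hx : x ∈ S <;>
      simp [Set.indicator_of_mem, Set.indicator_of_notMem, hx, not_lt, h]

instance : SFinite μ01 := by unfold μ01; infer_instance
instance (m : ℕ) : SFinite (μcube m) := by unfold μcube; infer_instance
instance : IsFiniteMeasure μ01 := by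
  constructor
  rw [μ01, Measure.restrict_apply_univ, Real.volume_Ioo]
  norm_num
instance (m : ℕ) : IsFiniteMeasure (μcube m) := by
  constructor
  rw [μcube_univ]; norm_num

/-- Fubini: the essential sup along almost every line is at most the global essential sup. -/
lemma psiK_le_essSup {n : ℕ} (f : (Fin (n+1) → ℝ) → ℝ≥0∞) (k : Fin (n+1)) :
    ∀ᵐ y ∂(μcube n), essSup (fun s : ℝ => f (k.insertNth s y)) μ01 ≤ essSup f (μcube (n+1)) := by
  set M := essSup f (μcube (n+1)) with hM
  -- the bad set has measure zero
  have h0 : μcube (n+1) {x | ¬ f x ≤ M} = 0 := ae_iff.mp (ae_le_essSup f)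
  have h0' : (volume : Measure (Fin (n+1) → ℝ)) ({x | ¬ f x ≤ M} ∩ cube (n+1)) = 0 := by
    rwa [μcube, Measure.restrict_apply' (measurableSet_cube (n+1))] at h0
  -- the measure preserving map (y, s) ↦ insertNth k s y
  have hmp : MeasurePreserving
      (fun p : (Fin n → ℝ) × ℝ => k.insertNth p.2 p.1)
      ((volume : Measure (Fin n → ℝ)).prod (volume : Measure ℝ))
      (volume : Measure (Fin (n+1) → ℝ)) := by
    have h1 : MeasurePreserving (MeasurableEquiv.piFinSuccAbove (fun _ : Fin (n+1) => ℝ) k).symm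
        ((volume : Measure ℝ).prod (volume : Measure (Fin n → ℝ)))
        (volume : Measure (Fin (n+1) → ℝ)) := by
      have := (measurePreserving_piFinSuccAbove (fun _ : Fin (n+1) => (volume : Measure ℝ)) k).symm
      simpa [volume_pi] using this
    have h2 : MeasurePreserving (Prod.swap : (Fin n → ℝ) × ℝ → ℝ × (Fin n → ℝ))
        ((volume : Measure (Fin n → ℝ)).prod (volume : Measure ℝ))
        ((volume : Measure ℝ).prod (volume : Measure (Fin n → ℝ))) :=
      Measure.measurePreserving_swap
    exact h1.comp h2
  have hpre : ((volume : Measure (Fin n → ℝ)).prod (volume : Measure ℝ))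
      ((fun p : (Fin n → ℝ) × ℝ => k.insertNth p.2 p.1) ⁻¹' ({x | ¬ f x ≤ M} ∩ cube (n+1))) = 0 := by
    rw [hmp.measure_preimage (NullMeasurableSet.of_null h0')]
    exact h0'
  have hQ : ((μcube n).prod μ01) {p : (Fin n → ℝ) × ℝ | ¬ f (k.insertNth p.2 p.1) ≤ M} = 0 := by
    rw [μcube, μ01, Measure.prod_restrict,
      Measure.restrict_apply' ((measurableSet_cube n).prod measurableSet_Ioo)]
    rw [← hpre]
    congr 1
    ext p
    rcases p with ⟨y, s⟩
    simp only [Set.mem_inter_iff, Set.mem_setOf_eq, Set.mem_preimage, Set.mem_prod,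
      insertNth_mem_cube]
    tauto
  have hae : ∀ᵐ p ∂((μcube n).prod μ01), f (k.insertNth p.2 p.1) ≤ M := ae_iff.mpr hQ
  have := Measure.ae_ae_of_ae_prod hae
  filter_upwards [this] with y hy
  exact essSup_le_of_ae_le M hy

noncomputable def slab (n : ℕ) (t : ℝ) : Set (Fin (n+1) → ℝ) :=
  Set.univ.pi fun j => Set.Ioo (0:ℝ) (if j = 0 then t else 1)

lemma measurableSet_slab (n : ℕ) (t : ℝ) : MeasurableSet (slab n t) :=
  MeasurableSet.univ_pi fun _ => measurableSet_Ioo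

lemma slab_subset_cube (n : ℕ) {t : ℝ} (ht : t ≤ 1) : slab n t ⊆ cube (n+1) := by
  refine Set.pi_mono fun j _ => ?_
  split_ifs with h
  · exact Set.Ioo_subset_Ioo le_rfl ht
  · exact le_rfl

lemma volume_slab (n : ℕ) (t : ℝ) : volume (slab n t) = ENNReal.ofReal t := by
  rw [slab, volume_pi_pi]
  simp only [Real.volume_Ioo]
  rw [Fin.prod_univ_succ]
  simp [Fin.succ_ne_zero]

lemma μcube_slab (n : ℕ) {t : ℝ} (ht : t ≤ 1) : μcube (n+1) (slab n t) = ENNReal.ofReal t := by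
  rw [μcube, Measure.restrict_apply' (measurableSet_cube (n+1)),
    Set.inter_eq_left.mpr (slab_subset_cube n ht), volume_slab]

lemma slab_section {n : ℕ} {t : ℝ} {y : Fin n → ℝ} (hy : y ∈ cube n) (s : ℝ) :
    (slab n t).indicator (fun _ => (1:ℝ≥0∞)) ((0 : Fin (n+1)).insertNth s y)
      = (Set.Ioo (0:ℝ) t).indicator (fun _ => (1:ℝ≥0∞)) s := by
  have hmem : (0 : Fin (n+1)).insertNth s y ∈ slab n t ↔ s ∈ Set.Ioo (0:ℝ) t := by
    rw [slab, insertNth_mem_pi]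
    simp only [if_pos rfl]
    constructor
    · exact fun h => h.1
    · intro hs
      refine ⟨hs, fun i _ => ?_⟩
      simp only [if_neg (Fin.succAbove_ne (0 : Fin (n+1)) i)]
      exact hy i (Set.mem_univ i)
  by_cases hs : s ∈ Set.Ioo (0:ℝ) t
  · rw [Set.indicator_of_mem (hmem.mpr hs), Set.indicator_of_mem hs]
  · rw [Set.indicator_of_notMem (fun h => hs (hmem.mp h)), Set.indicator_of_notMem hs]

lemma μ01_Ioo {t : ℝ} (ht : t ≤ 1) : μ01 (Set.Ioo (0:ℝ) t) = ENNReal.ofReal t := by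
  rw [μ01, Measure.restrict_apply measurableSet_Ioo,
    Set.inter_eq_left.mpr (Set.Ioo_subset_Ioo le_rfl ht), Real.volume_Ioo, sub_zero]



lemma RINorm_one_pos {m : ℕ} (X : RINorm (μcube m)) : 0 < X.N (fun _ => 1) := by
  rw [pos_iff_ne_zero]
  intro h
  have h2 := (X.eq_zero (fun _ => 1) measurable_const).mp h
  have h3 : μcube m {x : Fin m → ℝ | ¬ ((1:ℝ≥0∞) = 0)} = 0 := ae_iff.mp h2
  have h4 : {x : Fin m → ℝ | ¬ ((1:ℝ≥0∞) = 0)} = Set.univ := by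
    ext x; simp
  rw [h4, μcube_univ] at h3
  exact one_ne_zero h3

lemma RINorm_le_const {m : ℕ} (Y : RINorm (μcube m)) (f : (Fin m → ℝ) → ℝ≥0∞)
    {M : ℝ≥0∞} (hM : M ≠ ⊤) (hf : ∀ᵐ x ∂(μcube m), f x ≤ M) :
    Y.N f ≤ M * Y.N (fun _ => 1) := by
  have h1 : Y.N f ≤ Y.N (fun _ => M) := Y.mono _ _ hf
  have h2 : (fun _ : Fin m → ℝ => M) = fun x => ((M.toNNReal : ℝ≥0) : ℝ≥0∞) * (fun _ => (1:ℝ≥0∞)) x := by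
    funext x
    rw [mul_one, ENNReal.coe_toNNReal hM]
  rw [h2, Y.smul] at h1
  rwa [ENNReal.coe_toNNReal hM] at h1

/-- Key construction: the mixed-norm bound forces a uniform lower bound on the
`Z`-norm of indicators of sets of positive measure. -/
lemma key_lower {n : ℕ} (X : RINorm (μcube n)) (Z : RINorm (μcube (n+1))) (C₀ : ℝ≥0)
    (hemb : ∀ f : (Fin (n+1) → ℝ) → ℝ≥0∞, Measurable f → mixedNorm X f ≤ C₀ * Z.N f)
    (S : Set (Fin (n+1) → ℝ)) (hS : MeasurableSet S) (hS0 : μcube (n+1) S ≠ 0) :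
    X.N (fun _ => 1) ≤ C₀ * Z.N (S.indicator fun _ => 1) := by
  set m := μcube (n+1) S with hm
  have hm1 : m ≤ 1 := by
    rw [hm, ← μcube_univ (n+1)]
    exact measure_mono (Set.subset_univ S)
  have hmt : m ≠ ⊤ := (lt_of_le_of_lt hm1 (by norm_num)).ne
  set t := m.toReal with htdef
  have ht0 : 0 < t := ENNReal.toReal_pos hS0 hmt
  have ht1 : t ≤ 1 := by
    have := ENNReal.toReal_mono (by norm_num : (1:ℝ≥0∞) ≠ ⊤) hm1
    simpa using this
  have hofReal : ENNReal.ofReal t = m := ENNReal.ofReal_toReal hmt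
  set E := slab n t with hE
  -- the distribution functions of the two indicators agree
  have hZeq : Z.N (E.indicator fun _ => 1) = Z.N (S.indicator fun _ => 1) := by
    refine Z.ri _ _ (Measurable.indicator measurable_const (measurableSet_slab n t))
      (Measurable.indicator measurable_const hS) ?_
    intro a
    rw [measure_lt_indicator, measure_lt_indicator]
    split_ifs with h
    · rw [hE, μcube_slab n ht1, hofReal]
    · rfl
  -- for a.e. y in the cube, the section essential sup is at least 1
  have hψ : ∀ᵐ y ∂(μcube n), (fun _ : Fin n → ℝ => (1:ℝ≥0∞)) y ≤ psiK (E.indicator fun _ => 1) 0 y := by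
    have hmem : ∀ᵐ y ∂(μcube n), y ∈ cube n := by
      rw [μcube]
      exact ae_restrict_mem (measurableSet_cube n)
    filter_upwards [hmem] with y hy
    have hfun : (fun s : ℝ => (E.indicator fun _ => (1:ℝ≥0∞)) ((0 : Fin (n+1)).insertNth s y))
        = (Set.Ioo (0:ℝ) t).indicator (fun _ => (1:ℝ≥0∞)) := funext fun s => slab_section hy s
    show (1:ℝ≥0∞) ≤ psiK (E.indicator fun _ => 1) 0 y
    rw [psiK, hfun]
    refine one_le_essSup_indicator _ _ ?_
    show μ01 (Set.Ioo (0:ℝ) t) ≠ 0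
    rw [μ01_Ioo ht1]
    simp [ENNReal.ofReal_eq_zero, not_le, ht0]
  calc X.N (fun _ => 1) ≤ X.N (psiK (E.indicator fun _ => 1) 0) := X.mono _ _ hψ
    _ ≤ mixedNorm X (E.indicator fun _ => 1) := by
        rw [mixedNorm]
        exact Finset.single_le_sum (f := fun k => X.N (psiK (E.indicator fun _ => (1:ℝ≥0∞)) k))
          (fun i _ => zero_le) (Finset.mem_univ 0)
    _ ≤ C₀ * Z.N (E.indicator fun _ => 1) :=
        hemb _ (Measurable.indicator measurable_const (measurableSet_slab n t))
    _ = C₀ * Z.N (S.indicator fun _ => 1) := by rw [hZeq]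

/-- `Z(Iⁿ) ↪ R(X,L^∞)` holds if and only if `Z(Iⁿ) = L^∞(Iⁿ)` with equivalent norms
(ambient dimension `n+1 ≥ 2`, `X` an r.i. space on `I^n`). -/
theorem Z_into_mixed_iff_Linf (n : ℕ) (hn : 1 ≤ n)
    (X : RINorm (μcube n)) (Z : RINorm (μcube (n+1))) :
    (∃ C : ℝ≥0, ∀ f : (Fin (n+1) → ℝ) → ℝ≥0∞, Measurable f →
        mixedNorm X f ≤ C * Z.N f)
      ↔ (∃ c C : ℝ≥0, 0 < c ∧ ∀ f : (Fin (n+1) → ℝ) → ℝ≥0∞, Measurable f →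
          (c : ℝ≥0∞) * essSup f (μcube (n+1)) ≤ Z.N f ∧
            Z.N f ≤ C * essSup f (μcube (n+1))) := by
  constructor
  · rintro ⟨C₀, hemb⟩
    have hd_pos : 0 < X.N (fun _ => 1) := RINorm_one_pos X
    have hd_lt : X.N (fun _ => 1) < ⊤ := X.const_lt
    -- C₀ cannot vanish
    have hC₀ : (C₀ : ℝ≥0∞) ≠ 0 := by
      intro h0
      have := key_lower X Z C₀ hemb Set.univ MeasurableSet.univ
        (by rw [μcube_univ]; norm_num)
      rw [h0, zero_mul] at this
      exact hd_pos.ne' (le_antisymm this zero_le)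
    set c0 : ℝ≥0∞ := X.N (fun _ => 1) / (C₀ : ℝ≥0∞) with hc0
    have hc0_pos : 0 < c0 := ENNReal.div_pos hd_pos.ne' ENNReal.coe_ne_top
    have hc0_lt : c0 < ⊤ := ENNReal.div_lt_top hd_lt.ne hC₀
    set CZ : ℝ≥0 := (Z.N (fun _ => 1)).toNNReal + 1 with hCZ
    refine ⟨c0.toNNReal, CZ, ENNReal.toNNReal_pos hc0_pos.ne' hc0_lt.ne, fun f hf => ?_⟩
    constructor
    · -- lower bound
      rw [ENNReal.coe_toNNReal hc0_lt.ne]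
      have hr : ∀ r : ℝ≥0, (r:ℝ≥0∞) < essSup f (μcube (n+1)) → (r:ℝ≥0∞) * c0 ≤ Z.N f := by
        intro r hrM
        set S := {x : Fin (n+1) → ℝ | (r:ℝ≥0∞) < f x} with hSdef
        have hSmeas : MeasurableSet S := measurableSet_lt measurable_const hf
        have hS0 : μcube (n+1) S ≠ 0 := by
          intro h0
          have hae : ∀ᵐ x ∂(μcube (n+1)), f x ≤ (r:ℝ≥0∞) := by
            rw [ae_iff]
            convert h0 using 2
            ext x
            simp [hSdef, not_le]
          exact absurd (essSup_le_of_ae_le _ hae) (not_le.mpr hrM)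
        have hkey := key_lower X Z C₀ hemb S hSmeas hS0
        have hZS : c0 ≤ Z.N (S.indicator fun _ => 1) := by
          rw [hc0, ENNReal.div_le_iff_le_mul (Or.inl hC₀) (Or.inl ENNReal.coe_ne_top)]
          rw [mul_comm]
          exact hkey
        have hmono : Z.N (fun x => (r:ℝ≥0∞) * (S.indicator fun _ => (1:ℝ≥0∞)) x) ≤ Z.N f := by
          refine Z.mono _ _ (Filter.Eventually.of_forall fun x => ?_)
          by_cases hx : x ∈ S
          · rw [Set.indicator_of_mem hx, mul_one]
            exact le_of_lt hx
          · rw [Set.indicator_of_notMem hx, mul_zero]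
            exact zero_le
        rw [Z.smul] at hmono
        calc (r:ℝ≥0∞) * c0 ≤ (r:ℝ≥0∞) * Z.N (S.indicator fun _ => 1) :=
              mul_le_mul_right hZS _
          _ ≤ Z.N f := hmono
      have hM : essSup f (μcube (n+1)) ≤ Z.N f / c0 := by
        refine ENNReal.le_of_forall_nnreal_lt fun r hrM => ?_
        rw [ENNReal.le_div_iff_mul_le (Or.inl hc0_pos.ne') (Or.inl hc0_lt.ne)]
        exact hr r hrM
      calc c0 * essSup f (μcube (n+1)) ≤ c0 * (Z.N f / c0) := mul_le_mul_right hM _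
        _ = Z.N f := ENNReal.mul_div_cancel hc0_pos.ne' hc0_lt.ne
    · -- upper bound
      by_cases hMt : essSup f (μcube (n+1)) = ⊤
      · rw [hMt, ENNReal.mul_top]
        · exact le_top
        · simp [hCZ]
      · have h1 := RINorm_le_const Z f hMt (ae_le_essSup f)
        refine le_trans h1 ?_
        rw [mul_comm]
        refine mul_le_mul' ?_ le_rfl
        calc Z.N (fun _ => 1) = ((Z.N (fun _ => 1)).toNNReal : ℝ≥0∞) :=
              (ENNReal.coe_toNNReal Z.const_lt.ne).symm
          _ ≤ (CZ : ℝ≥0∞) := by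
              rw [hCZ]
              exact_mod_cast le_self_add
  · rintro ⟨c, C, hc, h⟩
    have hd_lt : X.N (fun _ => 1) < ⊤ := X.const_lt
    have hcne : (c : ℝ≥0∞) ≠ 0 := ENNReal.coe_ne_zero.mpr hc.ne'
    set K : ℝ≥0∞ := ((n+1 : ℕ) : ℝ≥0∞) * X.N (fun _ => 1) * (c : ℝ≥0∞)⁻¹ with hK
    have hKt : K ≠ ⊤ := by
      apply ENNReal.mul_ne_top (ENNReal.mul_ne_top (ENNReal.natCast_ne_top _) hd_lt.ne)
      exact ENNReal.inv_ne_top.mpr hcne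
    refine ⟨K.toNNReal + 1, fun f hf => ?_⟩
    obtain ⟨hlow, hupp⟩ := h f hf
    set M := essSup f (μcube (n+1)) with hMdef
    by_cases hMt : M = ⊤
    · have hZ : Z.N f = ⊤ := by
        rw [eq_top_iff]
        refine le_trans ?_ hlow
        rw [hMt, ENNReal.mul_top hcne]
      rw [hZ, ENNReal.mul_top]
      · exact le_top
      · exact_mod_cast (by positivity : (0:ℝ≥0) < K.toNNReal + 1).ne'
    · have hstep : ∀ k : Fin (n+1), X.N (psiK f k) ≤ M * X.N (fun _ => 1) := by
        intro k
        have hae : ∀ᵐ y ∂(μcube n), psiK f k y ≤ M := psiK_le_essSup f k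
        exact RINorm_le_const X (psiK f k) hMt hae
      have hsum : mixedNorm X f ≤ ((n+1 : ℕ) : ℝ≥0∞) * (M * X.N (fun _ => 1)) := by
        rw [mixedNorm]
        calc ∑ k : Fin (n+1), X.N (psiK f k) ≤ ∑ _k : Fin (n+1), M * X.N (fun _ => 1) :=
              Finset.sum_le_sum fun k _ => hstep k
          _ = ((n+1 : ℕ) : ℝ≥0∞) * (M * X.N (fun _ => 1)) := by
              rw [Finset.sum_const, Finset.card_univ, Fintype.card_fin, nsmul_eq_mul]
      have hMle : M ≤ (c : ℝ≥0∞)⁻¹ * Z.N f := by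
        calc M = (c : ℝ≥0∞)⁻¹ * ((c : ℝ≥0∞) * M) := by
              rw [← mul_assoc, ENNReal.inv_mul_cancel hcne ENNReal.coe_ne_top, one_mul]
          _ ≤ (c : ℝ≥0∞)⁻¹ * Z.N f := mul_le_mul_right hlow _
      calc mixedNorm X f ≤ ((n+1 : ℕ) : ℝ≥0∞) * (M * X.N (fun _ => 1)) := hsum
        _ ≤ ((n+1 : ℕ) : ℝ≥0∞) * (((c : ℝ≥0∞)⁻¹ * Z.N f) * X.N (fun _ => 1)) := by
            exact mul_le_mul_right (mul_le_mul_left hMle _) _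
        _ = K * Z.N f := by
            rw [hK]; ring
        _ ≤ ((K.toNNReal + 1 : ℝ≥0) : ℝ≥0∞) * Z.N f := by
            refine mul_le_mul_left ?_ _
            calc K = (K.toNNReal : ℝ≥0∞) := (ENNReal.coe_toNNReal hKt).symm
              _ ≤ ((K.toNNReal + 1 : ℝ≥0) : ℝ≥0∞) := by exact_mod_cast le_self_add
end
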